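/- The I-sparse set topology is finer than the I-density topology: every member of T_I belongs to 𝒰, i.e. if E ⊆ ℝ is Lebesgue measurable and I-d₋(x, E) = 1 for every x ∈ E, then ℝ \ E is I-sparse at every point of E. -/

import Mathlib

open MeasureTheory Filter Set
open scoped ENNReal

noncomputable section

/-- A nontrivial admissible ideal of subsets of ℕ: closed under subsets and
finite unions, contains every finite set, and does not contain ℕ itself. -/
structure AdmissibleIdeal : Type where
  carrier : Set (Set ℕ)
  subset_mem : ∀ ⦃A B : Set ℕ⦄, A ∈ carrier → B ⊆ A → B ∈ carrier
  union_mem : ∀ ⦃A B : Set ℕ⦄, A ∈ carrier → B ∈ carrier → A ∪ B ∈ carrier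
  finite_mem : ∀ A : Set ℕ, A.Finite → A ∈ carrier
  univ_not_mem : (Set.univ : Set ℕ) ∉ carrier

/-- The filter F(I) = {M ⊆ ℕ : ℕ \ M ∈ I} associated with the ideal I. -/
def AdmissibleIdeal.filter (I : AdmissibleIdeal) : Filter ℕ :=
  Filter.comk (· ∈ I.carrier) (I.finite_mem ∅ Set.finite_empty)
    (fun _t ht _s hs => I.subset_mem ht hs)
    (fun _s hs _t ht => I.union_mem hs ht)

/-- A sequence of closed intervals admissible about the point `p`:
each `J n` is a closed interval containing `p`, and
`{n : 0 < λ(J n) < 1/n} ∈ F(I)`. -/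
def AdmissibleSeq (I : AdmissibleIdeal) (p : ℝ) (J : ℕ → Set ℝ) : Prop :=
  (∀ n, ∃ a b : ℝ, a ≤ b ∧ J n = Set.Icc a b) ∧ (∀ n, p ∈ J n) ∧
    {n : ℕ | 0 < volume (J n) ∧ volume (J n) < (n : ℝ≥0∞)⁻¹} ∈ I.filter

/-- The sequence n ↦ λ(E ∩ J n)/λ(J n) (interpreted as 0 when λ(J n) = 0). -/
def ratioSeq (E : Set ℝ) (J : ℕ → Set ℝ) : ℕ → ℝ :=
  fun n => (volume (E ∩ J n) / volume (J n)).toReal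

/-- Upper I-density of `E` at `p`: sup over admissible sequences of the
limsup along `F(I)` of the measure ratios. -/
def upperIDensity (I : AdmissibleIdeal) (p : ℝ) (E : Set ℝ) : ℝ :=
  sSup {l : ℝ | ∃ J : ℕ → Set ℝ, AdmissibleSeq I p J ∧
    l = Filter.limsup (ratioSeq E J) I.filter}

/-- Lower I-density of `E` at `p`: inf over admissible sequences of the
liminf along `F(I)` of the measure ratios. -/
def lowerIDensity (I : AdmissibleIdeal) (p : ℝ) (E : Set ℝ) : ℝ :=
  sInf {l : ℝ | ∃ J : ℕ → Set ℝ, AdmissibleSeq I p J ∧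
    l = Filter.liminf (ratioSeq E J) I.filter}

/-- `C` is a measurable cover of `A`. -/
def IsMeasurableCover (C A : Set ℝ) : Prop :=
  MeasurableSet C ∧ A ⊆ C ∧
    ∀ F : Set ℝ, MeasurableSet F → F ⊆ C \ A → volume F = 0

/-- `A` is I-sparse at `x`, i.e. `A ∈ S_I(x)`. -/
def ISparseAt (I : AdmissibleIdeal) (A : Set ℝ) (x : ℝ) : Prop :=
  ∀ B : Set ℝ, MeasurableSet B → upperIDensity I x B < 1 →
    ∀ C : Set ℝ, IsMeasurableCover C A → upperIDensity I x (C ∪ B) < 1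

/-- The I-density topology T_I. -/
def IDensityTopology (I : AdmissibleIdeal) : Set (Set ℝ) :=
  {E | MeasurableSet E ∧ ∀ x ∈ E, lowerIDensity I x E = 1}

/-- The I-sparse set topology 𝒰. -/
def sparseTop (I : AdmissibleIdeal) : Set (Set ℝ) :=
  {E | ∀ x ∈ E, ISparseAt I Eᶜ x}

lemma filter_neBot (I : AdmissibleIdeal) : I.filter.NeBot := by
  rw [Filter.neBot_iff]
  intro h
  have : (∅ : Set ℕ) ∈ I.filter := h ▸ Filter.mem_bot
  have : (∅ : Set ℕ)ᶜ ∈ I.carrier := Filter.mem_comk.mp this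
  simpa using I.univ_not_mem (by simpa using this)

lemma ratio_nonneg (E : Set ℝ) (J : ℕ → Set ℝ) (n : ℕ) : 0 ≤ ratioSeq E J n :=
  ENNReal.toReal_nonneg

lemma ratio_le_one (E : Set ℝ) (J : ℕ → Set ℝ) (n : ℕ) : ratioSeq E J n ≤ 1 := by
  have h : volume (E ∩ J n) / volume (J n) ≤ 1 :=
    ENNReal.div_le_of_le_mul (by simpa using measure_mono (inter_subset_right))
  calc (volume (E ∩ J n) / volume (J n)).toReal ≤ (1:ℝ≥0∞).toReal :=
        ENNReal.toReal_mono ENNReal.one_ne_top h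
    _ = 1 := by simp

lemma bdd_above (I : AdmissibleIdeal) (E : Set ℝ) (J : ℕ → Set ℝ) :
    IsBoundedUnder (· ≤ ·) I.filter (ratioSeq E J) :=
  isBoundedUnder_of ⟨1, fun n => ratio_le_one E J n⟩

lemma bdd_below (I : AdmissibleIdeal) (E : Set ℝ) (J : ℕ → Set ℝ) :
    IsBoundedUnder (· ≥ ·) I.filter (ratioSeq E J) :=
  isBoundedUnder_of ⟨0, fun n => ratio_nonneg E J n⟩

lemma limsup_mem_Icc (I : AdmissibleIdeal) (E : Set ℝ) (J : ℕ → Set ℝ) :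
    limsup (ratioSeq E J) I.filter ∈ Set.Icc (0:ℝ) 1 := by
  have := filter_neBot I
  constructor
  · exact le_limsup_of_frequently_le
      (Frequently.of_forall fun n => ratio_nonneg E J n) (bdd_above I E J)
  · exact limsup_le_of_le ((bdd_below I E J).isCoboundedUnder_le)
      (Eventually.of_forall fun n => ratio_le_one E J n)

lemma exists_admissible (I : AdmissibleIdeal) (p : ℝ) :
    AdmissibleSeq I p (fun n => Set.Icc p (p + (2 * ((n:ℝ)+1))⁻¹)) := by
  refine ⟨fun n => ⟨p, p + (2*((n:ℝ)+1))⁻¹, le_add_of_nonneg_right (by positivity), rfl⟩,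
    fun n => ⟨le_refl p, le_add_of_nonneg_right (by positivity)⟩, ?_⟩
  have : {n : ℕ | 0 < volume (Set.Icc p (p + (2*(n+1):ℝ)⁻¹)) ∧
      volume (Set.Icc p (p + (2*(n+1):ℝ)⁻¹)) < (n : ℝ≥0∞)⁻¹} = Set.univ := by
    ext n
    simp only [Set.mem_setOf_eq, Set.mem_univ, iff_true]
    have hvol : volume (Set.Icc p (p + (2*(n+1):ℝ)⁻¹)) = ENNReal.ofReal ((2*(n+1):ℝ)⁻¹) := by
      rw [Real.volume_Icc]; ring_nf
    rw [hvol]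
    constructor
    · rw [ENNReal.ofReal_pos]; positivity
    · rcases Nat.eq_zero_or_pos n with h0 | hpos
      · subst h0; simp [ENNReal.ofReal_lt_top]
      · have hn : (0:ℝ) < n := by exact_mod_cast hpos
        have : ((n:ℝ≥0∞))⁻¹ = ENNReal.ofReal ((n:ℝ)⁻¹) := by
          rw [ENNReal.ofReal_inv_of_pos hn, ENNReal.ofReal_natCast]
        rw [this, ENNReal.ofReal_lt_ofReal_iff (by positivity)]
        rw [inv_lt_inv₀ (by positivity) hn]
        have : (n:ℝ) + 1 ≤ 2 * (n+1) := by nlinarith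
        linarith [this]
  rw [this]
  exact Filter.univ_mem

lemma upper_bddAbove (I : AdmissibleIdeal) (p : ℝ) (E : Set ℝ) :
    BddAbove {l : ℝ | ∃ J : ℕ → Set ℝ, AdmissibleSeq I p J ∧
      l = Filter.limsup (ratioSeq E J) I.filter} :=
  ⟨1, fun l ⟨J, _, hl⟩ => hl ▸ (limsup_mem_Icc I E J).2⟩

lemma limsup_le_upperIDensity (I : AdmissibleIdeal) (p : ℝ) (E : Set ℝ)
    (J : ℕ → Set ℝ) (hJ : AdmissibleSeq I p J) :
    limsup (ratioSeq E J) I.filter ≤ upperIDensity I p E :=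
  le_csSup (upper_bddAbove I p E) ⟨J, hJ, rfl⟩

lemma upperIDensity_nonneg (I : AdmissibleIdeal) (p : ℝ) (E : Set ℝ) :
    0 ≤ upperIDensity I p E :=
  le_trans (limsup_mem_Icc I E _).1
    (limsup_le_upperIDensity I p E _ (exists_admissible I p))

-- liminf of ratio of E along any admissible sequence is ≥ lowerIDensity
lemma lowerIDensity_le_liminf (I : AdmissibleIdeal) (p : ℝ) (E : Set ℝ)
    (J : ℕ → Set ℝ) (hJ : AdmissibleSeq I p J) :
    lowerIDensity I p E ≤ liminf (ratioSeq E J) I.filter := by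
  have := filter_neBot I
  refine csInf_le ⟨0, fun l ⟨K, _, hl⟩ => hl ▸ ?_⟩ ⟨J, hJ, rfl⟩
  exact le_liminf_of_le ((bdd_above I E K).isCoboundedUnder_ge)
    (Eventually.of_forall fun n => ratio_nonneg E K n)

-- if the lower density of E at x is 1, then along any admissible J the
-- limsup of the complement ratio is ≤ 0
lemma limsup_compl_le_zero (I : AdmissibleIdeal) (p : ℝ) (E : Set ℝ)
    (hEm : MeasurableSet E) (hEd : lowerIDensity I p E = 1)
    (J : ℕ → Set ℝ) (hJ : AdmissibleSeq I p J) :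
    limsup (ratioSeq Eᶜ J) I.filter ≤ 0 := by
  have := filter_neBot I
  have hliminf : (1:ℝ) ≤ liminf (ratioSeq E J) I.filter :=
    hEd ▸ lowerIDensity_le_liminf I p E J hJ
  have heq : ∀ᶠ n in I.filter, ratioSeq Eᶜ J n = 1 - ratioSeq E J n := by
    filter_upwards [hJ.2.2] with n hn
    obtain ⟨hd0, hdlt⟩ := hn
    have hdt : volume (J n) ≠ ⊤ := (lt_of_lt_of_le hdlt le_top).ne
    have hd0' : volume (J n) ≠ 0 := hd0.ne'
    have hab : volume (E ∩ J n) + volume (Eᶜ ∩ J n) = volume (J n) := by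
      have := measure_inter_add_diff (μ := volume) (J n) hEm
      rwa [Set.inter_comm, Set.diff_eq, Set.inter_comm (J n)] at this
    have hat : volume (E ∩ J n) ≠ ⊤ :=
      (lt_of_le_of_lt (measure_mono inter_subset_right) (lt_top_iff_ne_top.mpr hdt)).ne
    have hbt : volume (Eᶜ ∩ J n) ≠ ⊤ :=
      (lt_of_le_of_lt (measure_mono inter_subset_right) (lt_top_iff_ne_top.mpr hdt)).ne
    have hsum : ratioSeq E J n + ratioSeq Eᶜ J n = 1 := by
      unfold ratioSeq
      rw [← ENNReal.toReal_add (ENNReal.div_lt_top hat hd0').ne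
        (ENNReal.div_lt_top hbt hd0').ne, ENNReal.div_add_div_same, hab,
        ENNReal.div_self hd0' hdt, ENNReal.toReal_one]
    linarith
  refine le_of_forall_pos_le_add fun ε hε => ?_
  have h1 : ∀ᶠ n in I.filter, 1 - ε < ratioSeq E J n :=
    eventually_lt_of_lt_liminf (by linarith) (bdd_below I E J)
  have h2 : ∀ᶠ n in I.filter, ratioSeq Eᶜ J n ≤ 0 + ε := by
    filter_upwards [heq, h1] with n he h1n
    rw [he]; linarith
  exact limsup_le_of_le ((bdd_below I Eᶜ J).isCoboundedUnder_le) h2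

-- ratio of a union is at most ratio of Eᶜ plus ratio of B, when vol(C∩E)=0
lemma ratio_union_le (E C B : Set ℝ) (J : ℕ → Set ℝ) (h0 : volume (C ∩ E) = 0)
    (n : ℕ) : ratioSeq (C ∪ B) J n ≤ ratioSeq Eᶜ J n + ratioSeq B J n := by
  set d := volume (J n) with hd
  rcases eq_or_ne d 0 with hd0 | hd0
  · have h1 : volume ((C ∪ B) ∩ J n) = 0 :=
      le_antisymm (hd0 ▸ measure_mono inter_subset_right) zero_le
    have : ratioSeq (C ∪ B) J n = 0 := by
      unfold ratioSeq; rw [h1, ENNReal.zero_div]; simp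
    rw [this]
    exact add_nonneg (ratio_nonneg _ _ _) (ratio_nonneg _ _ _)
  rcases eq_or_ne d ⊤ with hdt | hdt
  · have : ratioSeq (C ∪ B) J n = 0 := by
      unfold ratioSeq; rw [← hd, hdt, ENNReal.div_top]; simp
    rw [this]
    exact add_nonneg (ratio_nonneg _ _ _) (ratio_nonneg _ _ _)
  · have hkey : volume ((C ∪ B) ∩ J n) ≤ volume (Eᶜ ∩ J n) + volume (B ∩ J n) := by
      have hsub : (C ∪ B) ∩ J n ⊆ ((Eᶜ ∩ J n) ∪ (C ∩ E)) ∪ (B ∩ J n) := by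
        rintro y ⟨hy, hyJ⟩
        rcases hy with hyC | hyB
        · by_cases hyE : y ∈ E
          · exact Or.inl (Or.inr ⟨hyC, hyE⟩)
          · exact Or.inl (Or.inl ⟨hyE, hyJ⟩)
        · exact Or.inr ⟨hyB, hyJ⟩
      calc volume ((C ∪ B) ∩ J n) ≤ volume (((Eᶜ ∩ J n) ∪ (C ∩ E)) ∪ (B ∩ J n)) :=
            measure_mono hsub
        _ ≤ volume ((Eᶜ ∩ J n) ∪ (C ∩ E)) + volume (B ∩ J n) := measure_union_le _ _
        _ ≤ (volume (Eᶜ ∩ J n) + volume (C ∩ E)) + volume (B ∩ J n) := by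
            gcongr; exact measure_union_le _ _
        _ = volume (Eᶜ ∩ J n) + volume (B ∩ J n) := by rw [h0, add_zero]
    have hbt : volume (Eᶜ ∩ J n) ≠ ⊤ :=
      (lt_of_le_of_lt (measure_mono inter_subset_right) (lt_top_iff_ne_top.mpr hdt)).ne
    have hct : volume (B ∩ J n) ≠ ⊤ :=
      (lt_of_le_of_lt (measure_mono inter_subset_right) (lt_top_iff_ne_top.mpr hdt)).ne
    have hdiv : volume ((C ∪ B) ∩ J n) / d ≤
        volume (Eᶜ ∩ J n) / d + volume (B ∩ J n) / d := by
      rw [ENNReal.div_add_div_same]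
      exact ENNReal.div_le_div_right hkey d
    unfold ratioSeq
    rw [← hd]
    calc (volume ((C ∪ B) ∩ J n) / d).toReal
        ≤ (volume (Eᶜ ∩ J n) / d + volume (B ∩ J n) / d).toReal :=
          ENNReal.toReal_mono (by
            exact (ENNReal.add_lt_top.mpr ⟨ENNReal.div_lt_top hbt hd0,
              ENNReal.div_lt_top hct hd0⟩).ne) hdiv
      _ = (volume (Eᶜ ∩ J n) / d).toReal + (volume (B ∩ J n) / d).toReal :=
          ENNReal.toReal_add (ENNReal.div_lt_top hbt hd0).ne (ENNReal.div_lt_top hct hd0).ne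

/-- The I-sparse set topology is finer than the I-density topology. -/
theorem iDensityTopology_subset_sparseTop (I : AdmissibleIdeal) :
    IDensityTopology I ⊆ sparseTop I := by
  rintro E ⟨hEm, hEd⟩ x hx B hB hBlt C hC
  have := filter_neBot I
  -- volume (C ∩ E) = 0
  have h0 : volume (C ∩ E) = 0 := by
    refine hC.2.2 (C ∩ E) (hC.1.inter hEm) ?_
    rintro y ⟨hyC, hyE⟩
    exact ⟨hyC, fun hyEc => hyEc hyE⟩
  have hmain : upperIDensity I x (C ∪ B) ≤ upperIDensity I x B := by
    refine Real.sSup_le ?_ (upperIDensity_nonneg I x B)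
    rintro l ⟨J, hJ, hl⟩
    subst hl
    have hstep : limsup (ratioSeq (C ∪ B) J) I.filter ≤ limsup (ratioSeq B J) I.filter := by
      refine le_of_forall_pos_le_add fun ε hε => ?_
      have hEc : limsup (ratioSeq Eᶜ J) I.filter < ε / 2 :=
        lt_of_le_of_lt (limsup_compl_le_zero I x E hEm (hEd x hx) J hJ) (by linarith)
      have h1 : ∀ᶠ n in I.filter, ratioSeq Eᶜ J n < ε / 2 :=
        eventually_lt_of_limsup_lt hEc (bdd_above I Eᶜ J)
      have h2 : ∀ᶠ n in I.filter, ratioSeq B J n <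
          limsup (ratioSeq B J) I.filter + ε / 2 :=
        eventually_lt_of_limsup_lt (by linarith) (bdd_above I B J)
      have h3 : ∀ᶠ n in I.filter, ratioSeq (C ∪ B) J n ≤
          limsup (ratioSeq B J) I.filter + ε := by
        filter_upwards [h1, h2] with n h1n h2n
        have := ratio_union_le E C B J h0 n
        linarith
      exact limsup_le_of_le ((bdd_below I (C ∪ B) J).isCoboundedUnder_le) h3
    exact le_trans hstep (limsup_le_upperIDensity I x B J hJ)
  exact lt_of_le_of_lt hmain hBlt
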